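/- arXiv:1307.3761 — 2 statements merged into one kernel-verified Lean document; each statement's English description precedes it below -/
import Mathlib

section
/- Let Λ be a discrete cocompact additive subgroup (full lattice) of covolume c in a finite-dimensional real vector space E, and let Ω ⊆ E be a measurable set with vol(Ω) > (q+1)·c, where q is a positive integer. Then there exist q+2 distinct points y_0, y_1, ..., y_{q+1} in Ω all lying in the same coset of Λ; in particular the differences y_0 - y_i (1 ≤ i ≤ q+1) give q+1 distinct nonzero elements of Λ lying in Ω - Ω. -/
open MeasureTheory Pointwise
open scoped ENNReal

/-- **Blichfeldt-type pigeonhole.** Let `Λ` be a full lattice of covolume `c` in a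
finite-dimensional real vector space `E`, and let `Ω ⊆ E` be measurable with
`vol(Ω) > (q+1)·c` for a positive integer `q`. Then there are `q+2` distinct points
`y₀, …, y_{q+1}` of `Ω` lying in the same coset of `Λ`; in particular the differences
`y₀ - yᵢ` (`1 ≤ i ≤ q+1`) are `q+1` distinct nonzero elements of `Λ` lying in `Ω - Ω`. -/
theorem blichfeldt_pigeonhole
    (E : Type*) [NormedAddCommGroup E] [NormedSpace ℝ E] [FiniteDimensional ℝ E]
    [MeasurableSpace E] [BorelSpace E]
    (μ : Measure E) [μ.IsAddHaarMeasure]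
    (Λ : Submodule ℤ E) [DiscreteTopology Λ] [IsZLattice ℝ Λ]
    (q : ℕ) (hq : 0 < q)
    (Ω : Set E) (hΩ : MeasurableSet Ω)
    (hvol : ENNReal.ofReal (((q : ℝ) + 1) * ZLattice.covolume Λ μ) < μ Ω) :
    ∃ y : Fin (q + 2) → E, Function.Injective y ∧ (∀ i, y i ∈ Ω) ∧
      (∀ i j, y i - y j ∈ Λ) ∧
      Function.Injective (fun i : Fin (q + 1) => y 0 - y i.succ) ∧
      (∀ i : Fin (q + 1), y 0 - y i.succ ∈ Λ ∧ y 0 - y i.succ ≠ 0 ∧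
        y 0 - y i.succ ∈ Ω - Ω) := by
  classical
  set b := Module.Free.chooseBasis ℤ Λ with hbdef
  set F : Set E := ZSpan.fundamentalDomain (b.ofZLatticeBasis ℝ) with hFdef
  have hF : IsAddFundamentalDomain Λ F μ := ZLattice.isAddFundamentalDomain b μ
  have hFmeas : MeasurableSet F := ZSpan.fundamentalDomain_measurableSet _
  have hFfin : μ F ≠ ⊤ :=
    ((ZSpan.fundamentalDomain_isBounded (b.ofZLatticeBasis ℝ)).measure_lt_top).ne
  have hcov : ZLattice.covolume Λ μ = (μ F).toReal :=
    ZLattice.covolume_eq_measure_fundamentalDomain Λ μ hF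
  have hvol' : ((q : ℝ≥0∞) + 1) * μ F < μ Ω := by
    have heq : ENNReal.ofReal (((q : ℝ) + 1) * (μ F).toReal) = ((q : ℝ≥0∞) + 1) * μ F := by
      rw [ENNReal.ofReal_mul (by positivity), ENNReal.ofReal_toReal hFfin]
      congr 1
      rw [ENNReal.ofReal_add (by positivity) zero_le_one]
      simp [ENNReal.ofReal_natCast]
    rwa [hcov, heq] at hvol
  set A : Λ → Set E := fun g => ((g : E) +ᵥ Ω) ∩ F with hA
  have hAmeas : ∀ g : Λ, MeasurableSet (A g) := fun g =>
    (hΩ.const_vadd (g : E)).inter hFmeas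
  haveI : MeasurableVAdd Λ E :=
    { measurable_const_vadd := fun c => (measurable_const_add (c : E)),
      measurable_vadd_const := fun x => measurable_subtype_coe.add_const x }
  haveI : VAddInvariantMeasure Λ E μ :=
    ⟨fun c s _ => measure_preimage_add μ (c : E) s⟩
  have hsum : μ Ω = ∑' g : Λ, μ (A g) := hF.measure_eq_tsum Ω
  have key : ∃ x : E, ∃ s : Finset Λ, q + 2 ≤ s.card ∧ ∀ g ∈ s, x ∈ A g := by
    by_contra h
    push_neg at h
    have hbnd : ∀ x : E, (∑' g : Λ, (A g).indicator (1 : E → ℝ≥0∞) x) ≤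
        ((q : ℝ≥0∞) + 1) * F.indicator 1 x := by
      intro x
      by_cases hxF : x ∈ F
      · rw [Set.indicator_of_mem hxF, Pi.one_apply, mul_one]
        rw [ENNReal.tsum_eq_iSup_sum]
        refine iSup_le fun s => ?_
        set s' := s.filter (fun g => x ∈ A g) with hs'
        have hsumeq : ∑ g ∈ s, (A g).indicator (1 : E → ℝ≥0∞) x = s'.card := by
          rw [hs', Finset.card_filter]
          push_cast
          refine Finset.sum_congr rfl fun g _ => ?_
          by_cases hg : x ∈ A g <;> simp [hg]
        rw [hsumeq]
        have hcard : s'.card ≤ q + 1 := by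
          by_contra hc
          push_neg at hc
          obtain ⟨g0, hg0, hg0n⟩ := h x s' hc
          exact hg0n (Finset.mem_filter.mp hg0).2
        calc (s'.card : ℝ≥0∞) ≤ ((q + 1 : ℕ) : ℝ≥0∞) := by exact_mod_cast hcard
          _ = (q : ℝ≥0∞) + 1 := by push_cast; ring
      · rw [Set.indicator_of_notMem hxF, mul_zero]
        refine le_of_eq (ENNReal.tsum_eq_zero.mpr fun g => ?_)
        exact Set.indicator_of_notMem (fun hx => hxF hx.2) _
    have hle : μ Ω ≤ ((q : ℝ≥0∞) + 1) * μ F := by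
      calc μ Ω = ∑' g : Λ, μ (A g) := hsum
        _ = ∑' g : Λ, ∫⁻ x, (A g).indicator 1 x ∂μ := by
            refine tsum_congr fun g => ?_
            rw [lintegral_indicator (hAmeas g)]
            simp
        _ = ∫⁻ x, ∑' g : Λ, (A g).indicator 1 x ∂μ :=
            (lintegral_tsum fun g => ((measurable_one.indicator (hAmeas g)).aemeasurable)).symm
        _ ≤ ∫⁻ x, ((q : ℝ≥0∞) + 1) * F.indicator 1 x ∂μ := lintegral_mono hbnd
        _ = ((q : ℝ≥0∞) + 1) * μ F := by
            rw [lintegral_const_mul _ (measurable_one.indicator hFmeas),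
              lintegral_indicator hFmeas]
            simp
    exact absurd hle (not_le.mpr hvol')
  obtain ⟨x, s, hs_card, hs_mem⟩ := key
  have hlen : q + 2 ≤ s.toList.length := by rwa [Finset.length_toList]
  set g : Fin (q + 2) → Λ := fun i => s.toList.get (Fin.castLE hlen i) with hgdef
  have hginj : Function.Injective g := by
    intro i j hij
    have := (List.nodup_iff_injective_get.mp s.nodup_toList) hij
    exact Fin.castLE_injective hlen this
  have hgmem : ∀ i, x ∈ A (g i) := fun i =>
    hs_mem _ (Finset.mem_toList.mp (s.toList.get_mem _))
  have hmemΩ : ∀ k : Fin (q + 2), x - (g k : E) ∈ Ω := by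
    intro k
    have hk := (hgmem k).1
    rw [Set.mem_vadd_set] at hk
    obtain ⟨w, hw, hwe⟩ := hk
    rw [vadd_eq_add] at hwe
    have : x - (g k : E) = w := by rw [← hwe]; abel
    rwa [this]
  refine ⟨fun i => x - (g i : E), ?_, hmemΩ, ?_, ?_, ?_⟩
  · intro i j hij
    simp only at hij
    exact hginj (Subtype.coe_injective (sub_right_injective hij))
  · intro i j
    have h1 : x - (g i : E) - (x - (g j : E)) = (g j : E) - (g i : E) := by abel
    rw [h1]
    exact sub_mem (g j).2 (g i).2
  · intro i j hij
    simp only at hij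
    have h1 : x - (g 0 : E) - (x - (g i.succ : E)) = (g i.succ : E) - (g 0 : E) := by abel
    have h2 : x - (g 0 : E) - (x - (g j.succ : E)) = (g j.succ : E) - (g 0 : E) := by abel
    rw [h1, h2] at hij
    have : (g i.succ : E) = (g j.succ : E) := by
      have := sub_left_injective hij
      exact this
    exact Fin.succ_injective _ (hginj (Subtype.coe_injective this))
  · intro i
    have heq : x - (g 0 : E) - (x - (g i.succ : E)) = (g i.succ : E) - (g 0 : E) := by abel
    refine ⟨?_, ?_, Set.sub_mem_sub (hmemΩ 0) (hmemΩ i.succ)⟩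
    · rw [heq]; exact sub_mem (g i.succ).2 (g 0).2
    · rw [heq, sub_ne_zero]
      intro hc
      exact absurd (hginj (Subtype.coe_injective hc)) (Fin.succ_ne_zero i)
end

section
/- Let Λ be a lattice of covolume c in a finite-dimensional real vector space E and suppose S ⊂ E is a measurable set with a finite intersection (S + S) ∩ Λ of cardinality q, and let (Ω_r)_{r>0} be an increasing family of measurable sets with vol(Ω_r) → ∞ as r → ∞ and Ω_r + Ω_r increasing. Then there exists r and a nonzero lattice point x ∈ Λ with x ∈ Ω_r - Ω_r and x ∉ S + S. -/
open MeasureTheory Pointwise Filter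

/-- **Counting step of the geometry-of-numbers lemma.** Let `Λ` be a full lattice in a
finite-dimensional real vector space `E`, `S ⊆ E` measurable with `(S + S) ∩ Λ` finite of
cardinality `q`, and `(Ω_r)_{r>0}` an increasing family of measurable sets whose volumes
tend to infinity, with `Ω_r + Ω_r` increasing. Then there exist `r` and a nonzero lattice
point `x ∈ Λ` with `x ∈ Ω_r - Ω_r` and `x ∉ S + S`. -/
theorem exists_lattice_point_outside
    (E : Type*) [NormedAddCommGroup E] [NormedSpace ℝ E] [FiniteDimensional ℝ E]
    [MeasurableSpace E] [BorelSpace E]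
    (μ : Measure E) [μ.IsAddHaarMeasure]
    (Λ : Submodule ℤ E) [DiscreteTopology Λ] [IsZLattice ℝ Λ]
    (S : Set E) (hS : MeasurableSet S)
    (q : ℕ) (hfin : ((S + S) ∩ (Λ : Set E)).Finite) (hq : hfin.toFinset.card = q)
    (Ω : ℝ → Set E) (hmeas : ∀ r, MeasurableSet (Ω r))
    (hmono : Monotone Ω)
    (hmono' : Monotone (fun r => Ω r + Ω r))
    (hvol : Tendsto (fun r => μ (Ω r)) atTop atTop) :
    ∃ (r : ℝ) (x : E), x ∈ Λ ∧ x ≠ 0 ∧ x ∈ Ω r - Ω r ∧ x ∉ S + S := by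
  classical
  by_contra hcon
  push_neg at hcon
  -- hcon : ∀ r x, x ∈ Λ → x ≠ 0 → x ∈ Ω r - Ω r → x ∈ S + S
  let b := Module.Free.chooseBasis ℤ Λ
  set F : Set E := ZSpan.fundamentalDomain (b.ofZLatticeBasis ℝ) with hFdef
  have fund : IsAddFundamentalDomain Λ F μ := ZLattice.isAddFundamentalDomain b μ
  have hFmeas : MeasurableSet F := ZSpan.fundamentalDomain_measurableSet _
  have hFfin : μ F < ⊤ := (ZSpan.fundamentalDomain_isBounded _).measure_lt_top
  set C : ENNReal := (q + 1) * μ F with hCdef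
  have hClt : C < ⊤ := ENNReal.mul_lt_top (by simp) hFfin
  obtain ⟨r, hr⟩ := (hvol.eventually_ge_atTop (C + 1)).exists
  have hrC : C < μ (Ω r) := lt_of_lt_of_le (ENNReal.lt_add_right hClt.ne one_ne_zero) hr
  -- the translates of `Ω r` by lattice points
  set A : Λ → Set E := fun g => ((g : E) +ᵥ Ω r) ∩ F with hAdef
  have hAmeas : ∀ g : Λ, MeasurableSet (A g) :=
    fun g => ((hmeas r).const_vadd _).inter hFmeas
  -- key pointwise multiplicity bound
  have key : ∀ x : E, (∑' g : Λ, (A g).indicator (1 : E → ENNReal) x)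
      ≤ (q + 1) * F.indicator (1 : E → ENNReal) x := by
    intro x
    set T : Set Λ := {g : Λ | x ∈ A g} with hTdef
    by_cases hT : T.Nonempty
    · obtain ⟨g₀, hg₀⟩ := hT
      set ψ : Λ → E := fun g => (g : E) - (g₀ : E) with hψdef
      have hψinj : Function.Injective ψ := fun a b hab => by
        have : (a : E) = (b : E) := by
          have := sub_left_injective hab
          exact this
        exact Subtype.ext this
      set B : Finset E := insert (0 : E) hfin.toFinset with hBdef
      have hmaps : ∀ g ∈ T, ψ g ∈ B := by
        intro g hg
        rcases eq_or_ne g g₀ with rfl | hne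
        · simp [hψdef, hBdef]
        · have h1 : x - (g : E) ∈ Ω r := by
            have := hg.1
            rcases this with ⟨y, hy, rfl⟩
            simpa [vadd_eq_add, add_sub_cancel_left] using hy
          have h2 : x - (g₀ : E) ∈ Ω r := by
            rcases hg₀.1 with ⟨y, hy, rfl⟩
            simpa [vadd_eq_add, add_sub_cancel_left] using hy
          have hmem : ψ g ∈ Ω r - Ω r := by
            have : (x - (g₀ : E)) - (x - (g : E)) ∈ Ω r - Ω r :=
              Set.sub_mem_sub h2 h1
            simpa [hψdef, sub_sub_sub_cancel_left] using this
          have hΛ : ψ g ∈ Λ := Λ.sub_mem g.2 g₀.2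
          have hne' : ψ g ≠ 0 := by
            simp only [hψdef, sub_ne_zero]
            exact fun h => hne (Subtype.ext h)
          have hSS : ψ g ∈ S + S := hcon r (ψ g) hΛ hne' hmem
          simp only [hBdef, Finset.mem_insert, Set.Finite.mem_toFinset]
          exact Or.inr ⟨hSS, hΛ⟩
      have hTfin : T.Finite := by
        have himg : (ψ '' T).Finite := B.finite_toSet.subset (by
          rintro _ ⟨g, hg, rfl⟩; exact hmaps g hg)
        exact Set.Finite.of_finite_image himg hψinj.injOn
      have hcard : hTfin.toFinset.card ≤ q + 1 := by
        have h1 : hTfin.toFinset.card ≤ B.card := by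
          exact Finset.card_le_card_of_injOn ψ
            (fun g hg => hmaps g (hTfin.mem_toFinset.mp hg))
            (fun a _ b _ h => hψinj h)
        have h2 : B.card ≤ q + 1 := by
          calc B.card ≤ hfin.toFinset.card + 1 := Finset.card_insert_le _ _
            _ = q + 1 := by rw [hq]
        exact h1.trans h2
      have hsum : (∑' g : Λ, (A g).indicator (1 : E → ENNReal) x)
          = ∑ g ∈ hTfin.toFinset, (A g).indicator (1 : E → ENNReal) x := by
        refine tsum_eq_sum ?_
        intro g hg
        have : g ∉ T := fun h => hg (hTfin.mem_toFinset.mpr h)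
        simp only [Set.indicator_apply_eq_zero]
        intro hx
        exact absurd hx this
      have hxF : x ∈ F := hg₀.2
      rw [hsum]
      calc ∑ g ∈ hTfin.toFinset, (A g).indicator (1 : E → ENNReal) x
          ≤ ∑ _g ∈ hTfin.toFinset, 1 := by
            refine Finset.sum_le_sum fun g _ => ?_
            exact Set.indicator_le_self _ _ x |>.trans (le_of_eq rfl)
        _ = hTfin.toFinset.card := by simp
        _ ≤ (q + 1 : ℕ) := by exact_mod_cast hcard
        _ = (q + 1) * F.indicator (1 : E → ENNReal) x := by
            simp [Set.indicator_of_mem hxF]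
    · have : ∀ g : Λ, (A g).indicator (1 : E → ENNReal) x = 0 := by
        intro g
        simp only [Set.indicator_apply_eq_zero]
        intro hx
        exact absurd ⟨g, hx⟩ hT
      simp [this]
  -- integrate the pointwise bound
  letI : MeasurableSpace Λ := ⊤
  haveI : MeasurableVAdd Λ E :=
    { measurable_const_vadd := fun g => measurable_id.const_add (g : E)
      measurable_vadd_const := fun c => measurable_from_top }
  haveI : VAddInvariantMeasure Λ E μ :=
    ⟨fun c s _ => measure_preimage_add μ (c : E) s⟩
  have hle : μ (Ω r) ≤ C := by
    calc μ (Ω r) = ∑' g : Λ, μ ((g +ᵥ Ω r) ∩ F) := fund.measure_eq_tsum (Ω r)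
      _ = ∑' g : Λ, μ (A g) := rfl
      _ = ∑' g : Λ, ∫⁻ x, (A g).indicator (1 : E → ENNReal) x ∂μ := by
          refine tsum_congr fun g => ?_
          rw [lintegral_indicator_one (hAmeas g)]
      _ = ∫⁻ x, ∑' g : Λ, (A g).indicator (1 : E → ENNReal) x ∂μ := by
          rw [lintegral_tsum fun g => (measurable_one.indicator (hAmeas g)).aemeasurable]
      _ ≤ ∫⁻ x, (q + 1) * F.indicator (1 : E → ENNReal) x ∂μ := lintegral_mono key
      _ = (q + 1) * μ F := by
          rw [lintegral_const_mul _ (measurable_one.indicator hFmeas),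
            lintegral_indicator_one hFmeas]
  exact absurd hle (not_le.mpr hrC)
end
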